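/- Let p be a prime, G = ⟨σ⟩ cyclic of order p, and M a finite ℤ_p[G]-module with M^ν = 1 (ν the norm element). If the endomorphism (1-σ)^m annihilates M for some m ≤ p-2, then M is an elementary abelian p-group (i.e., every element has order dividing p). -/

import Mathlib

private theorem binom_ring {R : Type*} [Ring R] (t : R) (n : ℕ) :
    (1 - t)^n = ∑ k ∈ Finset.range (n+1), (((-1)^k * (n.choose k) : ℤ)) • t^k := by
  have h : (1 - t) = (-t) + 1 := (neg_add_eq_sub t 1).symm
  rw [h, Commute.add_pow (Commute.neg_left (Commute.one_right t))]
  refine Finset.sum_congr rfl fun k _ => ?_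
  rw [one_pow, mul_one, neg_pow, zsmul_eq_mul, mul_assoc,
    ← (Nat.cast_commute (n.choose k) (t ^ k)).eq, ← mul_assoc]
  push_cast
  rfl

private theorem geom_expand {R : Type*} [Ring R] (t : R) (n : ℕ) :
    ∑ i ∈ Finset.range n, (1 - t)^i
      = ∑ k ∈ Finset.range n, (((-1)^k * (n.choose (k+1)) : ℤ)) • t^k := by
  induction n with
  | zero => simp
  | succ n IH =>
    rw [Finset.sum_range_succ, IH, binom_ring]
    have hR : ∀ k ∈ Finset.range (n+1),
        (((-1)^k * ((n+1).choose (k+1)) : ℤ)) • t^k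
          = (((-1)^k * (n.choose (k+1)) : ℤ)) • t^k + (((-1)^k * (n.choose k) : ℤ)) • t^k := by
      intro k _
      rw [← add_smul]
      congr 1
      rw [Nat.choose_succ_succ']
      push_cast
      ring
    rw [Finset.sum_congr rfl hR, Finset.sum_add_distrib, Finset.sum_range_succ
      (fun k => (((-1)^k * (n.choose (k+1)) : ℤ)) • t^k)]
    simp [Nat.choose_succ_self]

private theorem end_sum_apply {M : Type*} [AddCommMonoid M] {ι : Type*} (s : Finset ι)
    (f : ι → AddMonoid.End M) (x : M) : (∑ i ∈ s, f i) x = ∑ i ∈ s, f i x := by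
  induction s using Finset.cons_induction with
  | empty => simp [AddMonoid.End.zero_apply]
  | cons a s ha IH => rw [Finset.sum_cons, Finset.sum_cons, ← IH]; rfl

/-- The endomorphism `1 - σ` of an abelian group `M`, for `σ` an automorphism. -/
def oneSubSigma {M : Type*} [AddCommGroup M] (σ : AddAut M) : AddMonoid.End M :=
  1 - (show AddMonoid.End M from AddEquiv.toAddMonoidHom σ)

/-- For a finite `ℤ_p[G]`-module `M` (`G = ⟨σ⟩` of order `p`) annihilated by the norm
`ν = 1 + σ + ⋯ + σ^{p-1}`: if `(1-σ)^m` annihilates `M` for some `m ≤ p-2`, then `M`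
is elementary abelian (every element is killed by `p`). -/
theorem stmt9 {M : Type*} [AddCommGroup M] [Finite M] (p : ℕ) (hp : p.Prime)
    (σ : AddAut M) (hσ : p • σ = 0)
    (hpgrp : ∀ x : M, ∃ j : ℕ, p ^ j • x = 0)
    (hν : ∀ x : M, ∑ i ∈ Finset.range p, (i • σ) x = 0)
    (m : ℕ) (hm : m ≤ p - 2)
    (hann : ∀ x : M, ((oneSubSigma σ) ^ m) x = 0) :
    ∀ x : M, p • x = 0 := by
  set t : AddMonoid.End M := oneSubSigma σ with ht
  -- `1 - t = σ` as endomorphisms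
  have hs : (1 : AddMonoid.End M) - t = AddEquiv.toAddMonoidHom σ := by
    rw [ht]; exact sub_sub_cancel 1 _
  have hpow : ∀ (i : ℕ) (x : M), (((1 : AddMonoid.End M) - t)^i) x = (i • σ) x := by
    intro i
    induction i with
    | zero => intro x; simp [AddMonoid.End.one_apply]
    | succ i IH =>
      intro x
      rw [pow_succ, succ_nsmul]
      have h1 : (((1 : AddMonoid.End M) - t) ^ i * ((1 : AddMonoid.End M) - t)) x
          = (((1 : AddMonoid.End M) - t) ^ i) (((1 : AddMonoid.End M) - t) x) := rfl
      rw [h1, IH]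
      have : ((1 : AddMonoid.End M) - t) x = σ x := by rw [hs]; rfl
      rw [this]
      rfl
  -- annihilation by high powers of t
  have htz : ∀ (j : ℕ) (x : M), m ≤ j → (t^j) x = 0 := by
    intro j x hj
    have : t ^ j = t ^ (j - m) * t ^ m := by rw [← pow_add]; congr 1; omega
    rw [this]
    have : (t ^ (j - m) * t ^ m) x = (t ^ (j-m)) ((t^m) x) := rfl
    rw [this, hann x, map_zero]
  -- the main identity from the norm relation
  have hid : ∀ x : M,
      ∑ k ∈ Finset.range p, (((-1)^k * (p.choose (k+1)) : ℤ)) • ((t^k) x) = 0 := by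
    intro x
    have h1 := congrArg (fun f : AddMonoid.End M => f x) (geom_expand t p)
    rw [end_sum_apply, end_sum_apply] at h1
    have h2 : ∑ i ∈ Finset.range p, (((1:AddMonoid.End M) - t)^i) x
        = ∑ i ∈ Finset.range p, (i • σ) x := Finset.sum_congr rfl fun i _ => hpow i x
    rw [h2, hν x] at h1
    have h3 : ∀ k ∈ Finset.range p,
        ((((-1)^k * (p.choose (k+1)) : ℤ)) • t^k) x
          = (((-1)^k * (p.choose (k+1)) : ℤ)) • ((t^k) x) := by
      intro k _; rfl
    rw [Finset.sum_congr rfl h3] at h1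
    exact h1.symm
  have hp2 : 2 ≤ p := hp.two_le
  set q : ℕ := p - 2 with hq
  have hpq : p = q + 2 := by omega
  -- W x
  set W : M → M := fun x => ∑ k ∈ Finset.range q,
      ((((-1)^(k+1) * (p.choose (k+1+1)) : ℤ)) / (p:ℤ)) • ((t^(k+1)) x) with hWdef
  have hdvd : ∀ k, k < q → (p:ℤ) ∣ ((-1)^(k+1) * (p.choose (k+1+1)) : ℤ) := by
    intro k hk
    refine Dvd.dvd.mul_left ?_ _
    exact_mod_cast Int.natCast_dvd_natCast.mpr
      (Nat.Prime.dvd_choose_self hp (by omega) (by omega))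
  have hW : ∀ x : M, (p:ℤ) • x + (p:ℤ) • W x = 0 := by
    intro x
    have h1 := hid x
    rw [hpq] at h1
    rw [Finset.sum_range_succ, Finset.sum_range_succ'] at h1
    simp only [← hpq] at h1
    have hlast : (((-1)^(q+1) * (p.choose p) : ℤ)) • ((t^(q+1)) x) = 0 := by
      rw [htz (q+1) x (by omega), smul_zero]
    rw [hlast, add_zero] at h1
    have h0 : (((-1)^0 * (p.choose (0+1)) : ℤ)) • ((t^0) x) = (p:ℤ) • x := by
      simp [AddMonoid.End.one_apply]
    rw [h0] at h1
    have hmid : ∑ k ∈ Finset.range q, (((-1)^(k+1) * (p.choose (k+1+1)) : ℤ)) • ((t^(k+1)) x)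
        = (p:ℤ) • W x := by
      simp only [hWdef, Finset.smul_sum]
      refine Finset.sum_congr rfl fun k hk => ?_
      rw [← mul_smul, Int.mul_ediv_cancel' (hdvd k (Finset.mem_range.mp hk))]
    rw [hmid] at h1
    rw [add_comm]
    exact h1
  have hWt : ∀ (j : ℕ) (x : M), (t^(j+1)) x = 0 → (t^j) (W x) = 0 := by
    intro j x hx
    rw [hWdef]
    rw [map_sum]
    refine Finset.sum_eq_zero fun k hk => ?_
    rw [map_zsmul]
    have h1 : (t^j) ((t^(k+1)) x) = (t^k) ((t^(j+1)) x) := by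
      have e1 : (t^j) ((t^(k+1)) x) = (t^j * t^(k+1)) x := rfl
      have e2 : (t^k) ((t^(j+1)) x) = (t^k * t^(j+1)) x := rfl
      rw [e1, e2, ← pow_add, ← pow_add]
      congr 2
      omega
    rw [h1, hx, map_zero, smul_zero]
  have main : ∀ k : ℕ, ∀ x : M, (t^k) x = 0 → (p:ℤ) • x = 0 := by
    intro k
    induction k with
    | zero =>
      intro x hx
      have : x = 0 := by simpa [AddMonoid.End.one_apply] using hx
      rw [this, smul_zero]
    | succ k IH =>
      intro x hx
      have h1 := hW x
      have h2 := IH (W x) (hWt k x hx)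
      rw [h2, add_zero] at h1
      exact h1
  intro x
  have := main m x (hann x)
  rw [← natCast_zsmul]
  exact this
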